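/- Let c₂ = ∑_{l=1}^∞ 2^{−l}·l·ln l and p†_d(l) = 2^{−l}·(1 + d(l·ln l − c₂·l/2)) for l ≥ 1. There exists d₀ > 0 such that for all 0 < d < d₀ and every integer l ≥ 1: | p†_d(l) / ∑_{l'≥l} p†_d(l') − 1/2 | ≤ 0.05. -/

import Mathlib

/-- `c₂ = ∑_{l≥1} 2^{-l} l ln l`. -/
noncomputable def c2 : ℝ := ∑' l : ℕ+, (2 : ℝ) ^ (-((l : ℕ) : ℤ)) * (l : ℝ) * Real.log (l : ℝ)

/-- The near-optimal run-length distribution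
`p†_d(l) = 2^{-l}(1 + d(l ln l - c₂ l / 2))`. -/
noncomputable def pdag (d : ℝ) (l : ℕ+) : ℝ :=
  (2 : ℝ) ^ (-((l : ℕ) : ℤ)) * (1 + d * ((l : ℝ) * Real.log (l : ℝ) - c2 * (l : ℝ) / 2))

open Real

-- basic numeric log facts
lemma my_log_le_div_e {x : ℝ} (hx : 0 < x) : Real.log x ≤ x / Real.exp 1 := by
  have h1 : Real.log (x / Real.exp 1) ≤ x / Real.exp 1 - 1 :=
    Real.log_le_sub_one_of_pos (by positivity)
  have h2 : Real.log (x / Real.exp 1) = Real.log x - 1 := by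
    rw [Real.log_div (ne_of_gt hx) (Real.exp_ne_zero 1), Real.log_exp]
  linarith

lemma my_log_ge_four {n : ℕ} (h : 55 ≤ n) : 4 ≤ Real.log n := by
  have he : Real.exp 4 ≤ 55 := by
    have h1 : Real.exp 1 < 2.7182818286 := Real.exp_one_lt_d9
    have h4 : Real.exp 4 = Real.exp 1 ^ 4 := by
      rw [← Real.exp_nat_mul]; norm_num
    have : Real.exp 1 ^ 4 < 2.7182818286 ^ 4 :=
      pow_lt_pow_left₀ h1 (Real.exp_pos 1).le (by norm_num)
    nlinarith
  calc (4:ℝ) = Real.log (Real.exp 4) := (Real.log_exp 4).symm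
    _ ≤ Real.log 55 := Real.log_le_log (Real.exp_pos 4) he
    _ ≤ Real.log n := Real.log_le_log (by norm_num) (by exact_mod_cast h)

lemma sq_le_geom (n : ℕ) : (n:ℝ)^2 ≤ 6 * (3/2)^n := by
  induction n with
  | zero => norm_num
  | succ m ih =>
    rcases le_or_gt m 4 with hm | hm
    · interval_cases m <;> norm_num
    · have hm5 : (5:ℝ) ≤ m := by exact_mod_cast hm
      have : ((m:ℝ)+1)^2 ≤ (3/2) * (m:ℝ)^2 := by nlinarith
      have h2 : (6:ℝ) * (3/2)^(m+1) = (3/2) * (6 * (3/2)^m) := by ring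
      push_cast
      rw [h2]
      nlinarith [pow_pos (by norm_num : (0:ℝ) < 3/2) m]

lemma summable_of_geom {u : ℕ → ℝ} {C : ℝ} (h : ∀ k, |u k| ≤ C * (3/4)^k) :
    Summable u :=
  Summable.of_norm_bounded
    ((summable_geometric_of_lt_one (r := (3/4:ℝ)) (by norm_num) (by norm_num)).mul_left C)
    (by simpa [Real.norm_eq_abs] using h)

lemma abs_tsum_le_of_geom {u : ℕ → ℝ} {C : ℝ} (h : ∀ k, |u k| ≤ C * (3/4)^k) :
    |∑' k, u k| ≤ 4 * C := by
  have habs : ∀ k, |(|u k|)| ≤ C * (3/4)^k := fun k => by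
    rw [abs_abs]; exact h k
  have hs : Summable (fun k => |u k|) := summable_of_geom habs
  have h1 : |∑' k, u k| ≤ ∑' k, |u k| := by
    have := norm_tsum_le_tsum_norm (f := u) (by simpa [Real.norm_eq_abs] using hs)
    simpa [Real.norm_eq_abs] using this
  have h2 : ∑' k, |u k| ≤ ∑' k, C * (3/4:ℝ)^k := by
    refine Summable.tsum_le_tsum h hs ?_
    exact (summable_geometric_of_lt_one (by norm_num) (by norm_num)).mul_left C
  have h3 : ∑' k, C * (3/4:ℝ)^k = 4 * C := by
    rw [tsum_mul_left, tsum_geometric_of_lt_one (by norm_num) (by norm_num)]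
    norm_num; ring
  linarith

lemma geom_shift (n : ℕ) : ∑' k : ℕ, (1/2:ℝ)^(n+k) = 2 * (1/2)^n := by
  simp_rw [pow_add]
  rw [tsum_mul_left, tsum_geometric_of_lt_one (by norm_num) (by norm_num)]
  norm_num; ring

lemma zpow_eq_halfpow (m : ℕ) : (2 : ℝ) ^ (-(m : ℤ)) = (1/2)^m := by
  rw [zpow_neg, zpow_natCast, ← inv_pow]
  norm_num

lemma pnat_tsum (h : ℕ+ → ℝ) : ∑' l : ℕ+, h l = ∑' n : ℕ, h (Nat.succPNat n) :=
  (Equiv.pnatEquivNat.symm.tsum_eq h).symm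

lemma c2_eq : c2 = ∑' n : ℕ, (1/2:ℝ)^(n+1) * ((n+1:ℕ) * Real.log (n+1:ℕ)) := by
  rw [c2, pnat_tsum]
  congr 1; funext n
  have h1 : ((Nat.succPNat n : ℕ+) : ℕ) = n + 1 := rfl
  rw [h1, zpow_eq_halfpow]
  have h2 : ((Nat.succPNat n : ℕ+) : ℝ) = ((n+1 : ℕ) : ℝ) := by
    exact_mod_cast congrArg (Nat.cast : ℕ → ℝ) h1
  ring

lemma c2_nonneg : 0 ≤ c2 := by
  rw [c2_eq]
  refine tsum_nonneg fun n => ?_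
  have : (0:ℝ) ≤ Real.log (n+1:ℕ) := Real.log_nonneg (by push_cast; linarith [Nat.cast_nonneg (α := ℝ) n])
  positivity

lemma c2_le : c2 ≤ 7 := by
  rw [c2_eq]
  have key : ∀ n : ℕ, |(1/2:ℝ)^(n+1) * ((n+1:ℕ) * Real.log (n+1:ℕ))| ≤ (5/3) * (3/4)^n := by
    intro n
    set m : ℕ := n + 1 with hm
    have hm1 : (1:ℝ) ≤ (m:ℝ) := by exact_mod_cast Nat.le_add_left 1 n
    have hmpos : (0:ℝ) < m := by linarith
    have hlog0 : 0 ≤ Real.log (m:ℝ) := Real.log_nonneg hm1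
    have hlog : Real.log (m:ℝ) ≤ (m:ℝ) / 2.7 := by
      have h1 := my_log_le_div_e hmpos
      have h2 : (2.7:ℝ) ≤ Real.exp 1 := by
        have := Real.exp_one_gt_d9; linarith
      have : (m:ℝ) / Real.exp 1 ≤ (m:ℝ) / 2.7 := by
        apply div_le_div_of_nonneg_left (by linarith) (by norm_num) h2
      linarith
    have hsq : ((m:ℝ))^2 * (1/2)^m ≤ 6 * (3/4)^m := by
      have := sq_le_geom m
      have hp : (0:ℝ) ≤ (1/2)^m := by positivity
      calc ((m:ℝ))^2 * (1/2)^m ≤ (6 * (3/2)^m) * (1/2)^m := by nlinarith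
        _ = 6 * ((3/2) * (1/2))^m := by rw [mul_pow]; ring
        _ = 6 * (3/4)^m := by norm_num
    have habs : |(1/2:ℝ)^m * ((m:ℕ) * Real.log (m:ℕ))| = (1/2)^m * ((m:ℝ) * Real.log (m:ℝ)) :=
      abs_of_nonneg (mul_nonneg (by positivity) (mul_nonneg hmpos.le hlog0))
    rw [habs]
    have step1 : (1/2:ℝ)^m * ((m:ℝ) * Real.log (m:ℝ)) ≤ (1/2)^m * ((m:ℝ) * ((m:ℝ)/2.7)) := by
      have hp : (0:ℝ) ≤ (1/2:ℝ)^m := by positivity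
      have : (m:ℝ) * Real.log (m:ℝ) ≤ (m:ℝ) * ((m:ℝ)/2.7) :=
        mul_le_mul_of_nonneg_left hlog (by linarith)
      nlinarith
    have step2 : (1/2:ℝ)^m * ((m:ℝ) * ((m:ℝ)/2.7)) = ((m:ℝ)^2 * (1/2)^m) / 2.7 := by ring
    have step3 : ((m:ℝ)^2 * (1/2)^m) / 2.7 ≤ (6 * (3/4:ℝ)^m) / 2.7 := by gcongr
    have step4 : (6 * (3/4:ℝ)^m) / 2.7 ≤ (5/3) * (3/4)^n := by
      rw [hm, pow_succ]
      exact le_of_eq (by ring)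
    calc (1/2:ℝ)^m * ((m:ℝ) * Real.log (m:ℝ)) ≤ _ := step1
      _ = _ := step2
      _ ≤ _ := step3
      _ ≤ _ := step4
  have := abs_tsum_le_of_geom key
  have h1 : ∑' n : ℕ, (1/2:ℝ)^(n+1) * ((n+1:ℕ) * Real.log (n+1:ℕ)) ≤ 4 * (5/3) := le_of_abs_le this
  linarith

noncomputable def F (n : ℕ) : ℝ := n * Real.log n - c2 * n / 2

noncomputable def P (d : ℝ) (n : ℕ) : ℝ := (1/2:ℝ)^n * (1 + d * F n)

lemma abs_F_le (n : ℕ) : |F n| ≤ 4 * (n:ℝ)^2 := by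
  rcases Nat.eq_zero_or_pos n with h | h
  · subst h; simp [F]
  have hn1 : (1:ℝ) ≤ (n:ℝ) := by exact_mod_cast h
  have hpos : (0:ℝ) < n := by linarith
  have hlog0 : 0 ≤ Real.log n := Real.log_nonneg hn1
  have hlog : Real.log n ≤ (n:ℝ) := by
    have := Real.log_le_sub_one_of_pos hpos; linarith
  have hc0 := c2_nonneg
  have hc7 := c2_le
  rw [abs_le]
  constructor <;> [skip; skip] <;> unfold F <;> nlinarith [sq_nonneg ((n:ℝ) - 1)]

lemma wF_bound (n : ℕ) : |(1/2:ℝ)^n * F n| ≤ 24 * (3/4)^n := by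
  have h1 : |(1/2:ℝ)^n * F n| = (1/2)^n * |F n| := by
    rw [abs_mul, abs_of_nonneg (by positivity : (0:ℝ) ≤ (1/2:ℝ)^n)]
  rw [h1]
  have h2 : (1/2:ℝ)^n * |F n| ≤ (1/2)^n * (4 * (n:ℝ)^2) :=
    mul_le_mul_of_nonneg_left (abs_F_le n) (by positivity)
  have h3 : (1/2:ℝ)^n * (4 * (n:ℝ)^2) ≤ (1/2)^n * (4 * (6 * (3/2)^n)) :=
    mul_le_mul_of_nonneg_left (by nlinarith [sq_le_geom n]) (by positivity)
  have h4 : (1/2:ℝ)^n * (4 * (6 * (3/2)^n)) = 24 * (3/4)^n := by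
    have : (3/4:ℝ)^n = (3/2)^n * (1/2)^n := by
      rw [← mul_pow]; norm_num
    rw [this]; ring
  linarith

lemma log_succ_le {m : ℕ} (hm : 1 ≤ m) :
    Real.log ((m:ℝ)+1) ≤ Real.log m + 1/(m:ℝ) := by
  have hm1 : (1:ℝ) ≤ (m:ℝ) := by exact_mod_cast hm
  have hpos : (0:ℝ) < m := by linarith
  have h1 : Real.log ((m+1:ℝ)/m) ≤ ((m:ℝ)+1)/m - 1 :=
    Real.log_le_sub_one_of_pos (by positivity)
  have h2 : Real.log ((m+1:ℝ)/m) = Real.log ((m:ℝ)+1) - Real.log m :=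
    Real.log_div (by linarith) (ne_of_gt hpos)
  have h3 : ((m:ℝ)+1)/m - 1 = 1/(m:ℝ) := by field_simp; ring
  rw [h2, h3] at h1; linarith

lemma F_step_le {m : ℕ} (hm : 1 ≤ m) : F (m+1) - F m ≤ Real.log ((m:ℝ)+1) + 1 := by
  have hm1 : (1:ℝ) ≤ (m:ℝ) := by exact_mod_cast hm
  have hpos : (0:ℝ) < m := by linarith
  have h1 := log_succ_le hm
  have hc0 := c2_nonneg
  unfold F
  push_cast
  have : (m:ℝ) * (Real.log ((m:ℝ)+1) - Real.log m) ≤ 1 := by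
    calc (m:ℝ) * (Real.log ((m:ℝ)+1) - Real.log m) ≤ (m:ℝ) * (1/(m:ℝ)) :=
        mul_le_mul_of_nonneg_left (by linarith) hpos.le
      _ = 1 := by field_simp
  nlinarith

lemma F_step_ge {m : ℕ} (hm : 55 ≤ m) : 0 ≤ F (m+1) - F m := by
  have hm1 : (1:ℝ) ≤ (m:ℝ) := by exact_mod_cast (by omega : 1 ≤ m)
  have hpos : (0:ℝ) < m := by linarith
  have hlogmono : Real.log m ≤ Real.log ((m:ℝ)+1) :=
    Real.log_le_log hpos (by linarith)
  have hlog4 : (4:ℝ) ≤ Real.log ((m:ℝ)+1) := by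
    have := my_log_ge_four (n := m) hm
    linarith
  have hc7 := c2_le
  unfold F
  push_cast
  nlinarith

lemma F_mono {n : ℕ} (hn : 55 ≤ n) (k : ℕ) : F n ≤ F (n+k) := by
  induction k with
  | zero => simp
  | succ j ih =>
    have := F_step_ge (m := n + j) (by omega)
    have heq : n + (j+1) = (n+j) + 1 := by omega
    rw [heq]; linarith

lemma F_diff_le {n : ℕ} (hn : 1 ≤ n) (k : ℕ) :
    F (n+k) - F n ≤ (k:ℝ) * (Real.log ((n:ℝ)+(k:ℝ)) + 1) := by
  induction k with
  | zero => simp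
  | succ j ih =>
    have hstep := F_step_le (m := n + j) (by omega)
    have heq : n + (j+1) = (n+j) + 1 := by omega
    have hcast : ((n + j : ℕ):ℝ) = (n:ℝ) + (j:ℝ) := by push_cast; ring
    have hlogmono : Real.log ((n:ℝ)+(j:ℝ)) ≤ Real.log ((n:ℝ)+(j:ℝ)+1) := by
      apply Real.log_le_log
      · have : (1:ℝ) ≤ (n:ℝ) := by exact_mod_cast hn
        positivity
      · linarith
    have hlog0 : 0 ≤ Real.log ((n:ℝ)+(j:ℝ)+1) := by
      apply Real.log_nonneg
      have : (1:ℝ) ≤ (n:ℝ) := by exact_mod_cast hn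
      linarith [Nat.cast_nonneg (α := ℝ) j]
    rw [heq]
    rw [hcast] at hstep
    push_cast
    rw [show (n:ℝ)+((j:ℝ)+1) = (n:ℝ)+(j:ℝ)+1 from by ring]
    have hj0 : (0:ℝ) ≤ (j:ℝ) := Nat.cast_nonneg j
    nlinarith

lemma log_add_le {n k : ℕ} (hn : 1 ≤ n) :
    Real.log ((n:ℝ)+(k:ℝ)) ≤ Real.log n + (k:ℝ) := by
  have hn1 : (1:ℝ) ≤ (n:ℝ) := by exact_mod_cast hn
  have hk0 : (0:ℝ) ≤ (k:ℝ) := Nat.cast_nonneg k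
  have h1 : Real.log (((n:ℝ)+(k:ℝ))/(n:ℝ)) ≤ ((n:ℝ)+(k:ℝ))/(n:ℝ) - 1 :=
    Real.log_le_sub_one_of_pos (by positivity)
  have h2 : Real.log (((n:ℝ)+(k:ℝ))/(n:ℝ)) = Real.log ((n:ℝ)+(k:ℝ)) - Real.log n :=
    Real.log_div (by linarith) (by linarith)
  have h3 : ((n:ℝ)+(k:ℝ))/(n:ℝ) - 1 = (k:ℝ)/(n:ℝ) := by field_simp; ring
  have h4 : (k:ℝ)/(n:ℝ) ≤ (k:ℝ) := by
    rw [div_le_iff₀ (by linarith)]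
    nlinarith
  rw [h2, h3] at h1; linarith

lemma F_lower {n : ℕ} (hn : 55 ≤ n) : (n:ℝ) * (Real.log n - 3.5) ≤ F n := by
  have hc7 := c2_le
  have hn0 : (0:ℝ) ≤ (n:ℝ) := Nat.cast_nonneg n
  unfold F
  nlinarith

lemma F_nonneg {n : ℕ} (hn : 55 ≤ n) : 0 ≤ F n := by
  have h4 := my_log_ge_four hn
  have := F_lower hn
  have hn0 : (55:ℝ) ≤ (n:ℝ) := by exact_mod_cast hn
  nlinarith

section TailSums

variable (d : ℝ) (n : ℕ)

lemma S2 : Summable (fun k : ℕ => (1/2:ℝ)^(n+k) * F (n+k)) := by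
  apply summable_of_geom (C := 24)
  intro k
  have h1 := wF_bound (n+k)
  have h2 : (3/4:ℝ)^(n+k) ≤ (3/4)^k := by
    rw [pow_add]
    have hp : (0:ℝ) ≤ (3/4:ℝ)^k := by positivity
    have hle : (3/4:ℝ)^n ≤ 1 := pow_le_one₀ (by norm_num) (by norm_num)
    nlinarith
  calc |(1/2:ℝ)^(n+k) * F (n+k)| ≤ 24 * (3/4)^(n+k) := h1
    _ ≤ 24 * (3/4)^k := by linarith

lemma S1 : Summable (fun k : ℕ => (1/2:ℝ)^(n+k)) := by
  simp_rw [pow_add]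
  exact (summable_geometric_of_lt_one (r := (1/2:ℝ)) (by norm_num) (by norm_num)).mul_left _

noncomputable def B : ℝ := ∑' k : ℕ, (1/2:ℝ)^(n+k) * F (n+k)

lemma T_split : ∑' k : ℕ, P d (n+k) = 2 * (1/2:ℝ)^n + d * B n := by
  have h1 : ∀ k : ℕ, P d (n+k) = (1/2:ℝ)^(n+k) + d * ((1/2)^(n+k) * F (n+k)) := by
    intro k; unfold P; ring
  rw [tsum_congr h1, Summable.tsum_add (S1 n) ((S2 n).mul_left d), tsum_mul_left, geom_shift]
  rfl

lemma D_eq : (1/2:ℝ)^n * F n - B n / 2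
    = ∑' k : ℕ, (1/2:ℝ)^(n+k+1) * (F n - F (n+k)) := by
  have hSa : Summable (fun k : ℕ => (1/2:ℝ)^(n+k+1) * F n) := by
    apply Summable.mul_right
    have := S1 (n+1)
    apply this.congr
    intro k; rw [show n+1+k = n+k+1 from by omega]
  have hSb : Summable (fun k : ℕ => (1/2:ℝ)^(n+k+1) * F (n+k)) := by
    have := (S2 n).mul_left (1/2:ℝ)
    apply this.congr
    intro k
    rw [pow_succ]; ring
  have hsum : ∀ k : ℕ, (1/2:ℝ)^(n+k+1) * (F n - F (n+k))
      = (1/2:ℝ)^(n+k+1) * F n - (1/2:ℝ)^(n+k+1) * F (n+k) := fun k => by ring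
  rw [tsum_congr hsum, Summable.tsum_sub hSa hSb]
  have ha : ∑' k : ℕ, (1/2:ℝ)^(n+k+1) * F n = (1/2:ℝ)^n * F n := by
    rw [tsum_mul_right]
    have : ∑' k : ℕ, (1/2:ℝ)^(n+k+1) = ∑' k : ℕ, (1/2:ℝ)^((n+1)+k) :=
      tsum_congr fun k => by rw [show n+k+1 = (n+1)+k from by omega]
    rw [this, geom_shift, pow_succ]
    ring
  have hb : ∑' k : ℕ, (1/2:ℝ)^(n+k+1) * F (n+k) = B n / 2 := by
    have : ∀ k : ℕ, (1/2:ℝ)^(n+k+1) * F (n+k) = (1/2) * ((1/2:ℝ)^(n+k) * F (n+k)) :=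
      fun k => by rw [pow_succ]; ring
    rw [tsum_congr this, tsum_mul_left]
    unfold B; ring
  rw [ha, hb]

end TailSums

lemma pdag_eq_P (d : ℝ) (l : ℕ+) : pdag d l = P d (l:ℕ) := by
  unfold pdag P F
  rw [zpow_eq_halfpow]

lemma tail_eq (d : ℝ) (l : ℕ+) :
    (∑' l' : ℕ+, if l ≤ l' then pdag d l' else 0) = ∑' k : ℕ, P d ((l:ℕ)+k) := by
  set f : ℕ+ → ℝ := fun x => if l ≤ x then pdag d x else 0 with hf
  have hlpos : 0 < (l:ℕ) := l.pos
  set i : ℕ → ℕ+ := fun k => ⟨(l:ℕ)+k, by omega⟩ with hi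
  have hinj : Function.Injective i := by
    intro a b hab
    have : (l:ℕ) + a = (l:ℕ) + b := congrArg (fun x : ℕ+ => (x:ℕ)) hab
    omega
  have hsupp : Function.support f ⊆ Set.range i := by
    intro x hx
    have hle : l ≤ x := by
      by_contra h
      apply hx
      simp [hf, h]
    have hlex : (l:ℕ) ≤ (x:ℕ) := hle
    refine ⟨(x:ℕ) - (l:ℕ), ?_⟩
    apply PNat.coe_injective
    show (l:ℕ) + ((x:ℕ) - (l:ℕ)) = (x:ℕ)
    omega
  have := hinj.tsum_eq hsupp
  rw [← this]
  refine tsum_congr fun k => ?_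
  have hle : l ≤ i k := by
    have : (l:ℕ) ≤ ((i k : ℕ+) : ℕ) := by simp [hi]
    exact this
  have : f (i k) = pdag d (i k) := by simp [hf, hle]
  rw [this, pdag_eq_P]
  rfl

lemma B_abs (n : ℕ) : |B n| ≤ 96 * (3/4:ℝ)^n := by
  have h : ∀ k : ℕ, |(1/2:ℝ)^(n+k) * F (n+k)| ≤ (24 * (3/4:ℝ)^n) * (3/4)^k := by
    intro k
    have := wF_bound (n+k)
    calc |(1/2:ℝ)^(n+k) * F (n+k)| ≤ 24 * (3/4)^(n+k) := this
      _ = (24 * (3/4:ℝ)^n) * (3/4)^k := by rw [pow_add]; ring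
  have := abs_tsum_le_of_geom h
  calc |B n| ≤ 4 * (24 * (3/4:ℝ)^n) := this
    _ = 96 * (3/4:ℝ)^n := by ring

lemma B_lower {n : ℕ} (hn : 55 ≤ n) : 2 * (1/2:ℝ)^n * F n ≤ B n := by
  have hmono : ∀ k : ℕ, (1/2:ℝ)^(n+k) * F n ≤ (1/2:ℝ)^(n+k) * F (n+k) := by
    intro k
    exact mul_le_mul_of_nonneg_left (F_mono hn k) (by positivity)
  have hsum : ∑' k : ℕ, (1/2:ℝ)^(n+k) * F n = 2 * (1/2:ℝ)^n * F n := by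
    rw [tsum_mul_right, geom_shift]
  have := Summable.tsum_le_tsum hmono ((S1 n).mul_right (F n)) (S2 n)
  rw [hsum] at this
  exact this

lemma lin_geom (k : ℕ) : (k:ℝ) * (1/2)^k ≤ 6 * (3/4:ℝ)^k := by
  have h1 : (k:ℝ) ≤ (k:ℝ)^2 := by
    rcases Nat.eq_zero_or_pos k with h | h
    · subst h; norm_num
    · have : (1:ℝ) ≤ (k:ℝ) := by exact_mod_cast h
      nlinarith
  have h2 : (k:ℝ)^2 * (1/2)^k ≤ 6 * (3/4:ℝ)^k := by
    have := sq_le_geom k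
    have hp : (0:ℝ) ≤ (1/2:ℝ)^k := by positivity
    calc (k:ℝ)^2 * (1/2)^k ≤ (6 * (3/2:ℝ)^k) * (1/2)^k := by nlinarith
      _ = 6 * ((3/2:ℝ) * (1/2))^k := by rw [mul_pow]; ring
      _ = 6 * (3/4:ℝ)^k := by norm_num
  have hp : (0:ℝ) ≤ (1/2:ℝ)^k := by positivity
  nlinarith

lemma sq_geom (k : ℕ) : (k:ℝ)^2 * (1/2)^k ≤ 6 * (3/4:ℝ)^k := by
  have := sq_le_geom k
  have hp : (0:ℝ) ≤ (1/2:ℝ)^k := by positivity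
  calc (k:ℝ)^2 * (1/2)^k ≤ (6 * (3/2:ℝ)^k) * (1/2)^k := by nlinarith
    _ = 6 * ((3/2:ℝ) * (1/2))^k := by rw [mul_pow]; ring
    _ = 6 * (3/4:ℝ)^k := by norm_num

lemma D_abs_large {n : ℕ} (hn : 55 ≤ n) :
    |(1/2:ℝ)^n * F n - B n / 2| ≤ (1/2:ℝ)^n * (12 * Real.log n + 24) := by
  have hn1 : 1 ≤ n := by omega
  have hlog0 : 0 ≤ Real.log n := Real.log_nonneg (by exact_mod_cast hn1)
  rw [D_eq]
  have key : ∀ k : ℕ, |(1/2:ℝ)^(n+k+1) * (F n - F (n+k))|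
      ≤ ((1/2:ℝ)^(n+1) * (6 * Real.log n + 12)) * (3/4)^k := by
    intro k
    have hFd : F (n+k) - F n ≤ (k:ℝ) * (Real.log ((n:ℝ)+(k:ℝ)) + 1) := F_diff_le hn1 k
    have hFm : 0 ≤ F (n+k) - F n := by linarith [F_mono hn k]
    have hlogadd : Real.log ((n:ℝ)+(k:ℝ)) ≤ Real.log n + (k:ℝ) := log_add_le hn1
    have hk0 : (0:ℝ) ≤ (k:ℝ) := Nat.cast_nonneg k
    have habs : |(1/2:ℝ)^(n+k+1) * (F n - F (n+k))| = (1/2:ℝ)^(n+k+1) * (F (n+k) - F n) := by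
      rw [abs_mul, abs_of_nonneg (by positivity : (0:ℝ) ≤ (1/2:ℝ)^(n+k+1)),
        abs_of_nonpos (by linarith : F n - F (n+k) ≤ 0)]
      ring
    rw [habs]
    have hsplit : (1/2:ℝ)^(n+k+1) = (1/2)^(n+1) * (1/2)^k := by
      rw [show n+k+1 = (n+1)+k from by omega, pow_add]
    have hFd2 : F (n+k) - F n ≤ (k:ℝ) * Real.log n + (k:ℝ)^2 + (k:ℝ) := by
      have : (k:ℝ) * (Real.log ((n:ℝ)+(k:ℝ)) + 1) ≤ (k:ℝ) * (Real.log n + (k:ℝ) + 1) :=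
        mul_le_mul_of_nonneg_left (by linarith) hk0
      nlinarith
    have hgeom : (1/2:ℝ)^k * ((k:ℝ) * Real.log n + (k:ℝ)^2 + (k:ℝ))
        ≤ (3/4:ℝ)^k * (6 * Real.log n + 12) := by
      have h1 := lin_geom k
      have h2 := sq_geom k
      have hp34 : (0:ℝ) ≤ (3/4:ℝ)^k := by positivity
      nlinarith [mul_le_mul_of_nonneg_right h1 hlog0]
    have hp : (0:ℝ) ≤ (1/2:ℝ)^(n+1) := by positivity
    have hpk : (0:ℝ) ≤ (1/2:ℝ)^k := by positivity
    calc (1/2:ℝ)^(n+k+1) * (F (n+k) - F n)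
        ≤ (1/2:ℝ)^(n+k+1) * ((k:ℝ) * Real.log n + (k:ℝ)^2 + (k:ℝ)) :=
          mul_le_mul_of_nonneg_left hFd2 (by positivity)
      _ = (1/2:ℝ)^(n+1) * ((1/2:ℝ)^k * ((k:ℝ) * Real.log n + (k:ℝ)^2 + (k:ℝ))) := by
          rw [hsplit]; ring
      _ ≤ (1/2:ℝ)^(n+1) * ((3/4:ℝ)^k * (6 * Real.log n + 12)) :=
          mul_le_mul_of_nonneg_left hgeom hp
      _ = ((1/2:ℝ)^(n+1) * (6 * Real.log n + 12)) * (3/4)^k := by ring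
  have := abs_tsum_le_of_geom key
  calc |∑' k : ℕ, (1/2:ℝ)^(n+k+1) * (F n - F (n+k))|
      ≤ 4 * ((1/2:ℝ)^(n+1) * (6 * Real.log n + 12)) := this
    _ = (1/2:ℝ)^n * (12 * Real.log n + 24) := by rw [pow_succ]; ring


lemma small_case_arith (d p Bn DD T : ℝ)
    (hd : 0 < d) (hdlt : d < (1/2:ℝ)^1600)
    (hpa : (1/2:ℝ)^1499 ≤ p)
    (hBabs : |Bn| ≤ 96)
    (hT : T = 2 * p + d * Bn)
    (hDabs : |DD| ≤ 72) :
    0 < T ∧ |d * DD| ≤ 0.05 * T := by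
  have ha_pos : (0:ℝ) < (1/2:ℝ)^1499 := by positivity
  have he_pos : (0:ℝ) < (1/2:ℝ)^1600 := by positivity
  have hsplit7 : (1/2:ℝ)^1600 * 96 = (3/4) * (1/2:ℝ)^1593 := by
    rw [show (1600:ℕ) = 7 + 1593 from rfl, pow_add]
    norm_num; ring
  have hsplit94 : (1/2:ℝ)^1593 = (1/2:ℝ)^94 * (1/2:ℝ)^1499 := by rw [← pow_add]
  have hb_le_a : (1/2:ℝ)^1593 ≤ (1/2:ℝ)^1499 := by
    rw [hsplit94]
    have h94 : (1/2:ℝ)^94 ≤ 1 := pow_le_one₀ (by norm_num) (by norm_num)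
    nlinarith [mul_le_mul_of_nonneg_right h94 ha_pos.le]
  have hb_pos : (0:ℝ) < (1/2:ℝ)^1593 := by positivity
  have hd96 : d * 96 ≤ (1/2:ℝ)^1593 := by
    refine le_of_lt (lt_of_lt_of_le (mul_lt_mul_of_pos_right hdlt (by norm_num)) ?_)
    rw [hsplit7]
    exact mul_le_of_le_one_left hb_pos.le (by norm_num)
  have hTlb : (1/2:ℝ)^1499 ≤ T := by
    rw [hT]
    have h1 : -(d*96) ≤ d * Bn := by nlinarith [neg_abs_le Bn]
    linarith
  have hTpos : 0 < T := lt_of_lt_of_le ha_pos hTlb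
  refine ⟨hTpos, ?_⟩
  have hNabs : |d * DD| ≤ 72 * (1/2:ℝ)^1600 := by
    rw [abs_mul, abs_of_pos hd]
    nlinarith [abs_nonneg DD]
  have hsplit101 : (1/2:ℝ)^1600 = (1/2:ℝ)^101 * (1/2:ℝ)^1499 := by rw [← pow_add]
  have h101 : (72:ℝ) * (1/2:ℝ)^101 ≤ 0.05 := by
    have h11 : (1/2:ℝ)^101 ≤ (1/2:ℝ)^11 :=
      pow_le_pow_of_le_one (by norm_num) (by norm_num) (by norm_num)
    have h12 : (72:ℝ) * (1/2:ℝ)^11 ≤ 0.05 := by norm_num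
    nlinarith
  have hfinal : (72:ℝ) * (1/2:ℝ)^1600 ≤ 0.05 * (1/2:ℝ)^1499 := by
    rw [hsplit101, ← mul_assoc]
    exact mul_le_mul_of_nonneg_right h101 ha_pos.le
  exact hNabs.trans (hfinal.trans (mul_le_mul_of_nonneg_left hTlb (by norm_num)))

lemma large_case_arith (d p x nn Fn Bn DD T : ℝ)
    (hd : 0 < d) (hp : 0 < p) (hx : 4 ≤ x) (hnn : 1500 ≤ nn)
    (hFl : nn * (x - 3.5) ≤ Fn) (hF0 : 0 ≤ Fn)
    (hBl : 2 * p * Fn ≤ Bn)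
    (hT : T = 2 * p + d * Bn)
    (hDabs : |DD| ≤ p * (12 * x + 24)) :
    0 < T ∧ |d * DD| ≤ 0.05 * T := by
  have hdF : 0 ≤ d * Fn := mul_nonneg hd.le hF0
  have hTlb : 2 * p * (1 + d * Fn) ≤ T := by
    rw [hT]
    have h := mul_le_mul_of_nonneg_left hBl hd.le
    nlinarith
  have hTpos : 0 < T :=
    lt_of_lt_of_le (mul_pos (by linarith : (0:ℝ) < 2 * p)
      (by linarith : (0:ℝ) < 1 + d * Fn)) hTlb
  refine ⟨hTpos, ?_⟩
  have hNabs : |d * DD| ≤ d * (p * (12 * x + 24)) := by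
    rw [abs_mul, abs_of_pos hd]
    nlinarith [abs_nonneg DD]
  have hkey : d * (12 * x + 24) ≤ 0.1 * (1 + d * Fn) := by
    have h1 : 12 * x + 24 ≤ 18 * x := by linarith
    have h2 : 18 * x ≤ nn * x / 80 := by nlinarith
    have h3 : nn * x / 80 ≤ nn * (x - 3.5) / 10 := by nlinarith
    have h4 : d * (12 * x + 24) ≤ d * (nn * (x - 3.5) / 10) := by
      apply mul_le_mul_of_nonneg_left _ hd.le
      linarith
    have h5 : d * (nn * (x - 3.5) / 10) ≤ 0.1 * (d * Fn) := by
      have := mul_le_mul_of_nonneg_left hFl hd.le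
      linarith
    linarith
  have hstep : |d * DD| ≤ 0.05 * (2 * p * (1 + d * Fn)) := by
    have := mul_le_mul_of_nonneg_left hkey hp.le
    nlinarith
  nlinarith

/-- Lemma 22 of the paper: for all sufficiently small `d`, the hazard rate of
`p†_d` is within `0.05` of `1/2` at every `l ≥ 1`. -/
theorem stmt_13 :
    ∃ d₀ : ℝ, 0 < d₀ ∧
      ∀ d : ℝ, 0 < d → d < d₀ →
        ∀ l : ℕ+,
          |pdag d l / (∑' l' : ℕ+, if l ≤ l' then pdag d l' else 0) - 1 / 2| ≤ 0.05 := by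
  refine ⟨(1/2:ℝ)^1600, by positivity, fun d hd hdlt l => ?_⟩
  set n : ℕ := (l:ℕ) with hn
  have hn1 : 1 ≤ n := l.pos
  set T : ℝ := ∑' l' : ℕ+, (if l ≤ l' then pdag d l' else 0) with hT
  have hTeq : T = 2 * (1/2:ℝ)^n + d * B n := by
    rw [hT, tail_eq, T_split]
  have hPeq : pdag d l = (1/2:ℝ)^n * (1 + d * F n) := by
    rw [pdag_eq_P]; rfl
  set D : ℝ := (1/2:ℝ)^n * F n - B n / 2 with hD
  have hNeq : pdag d l - T / 2 = d * D := by
    rw [hPeq, hTeq, hD]; ring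
  suffices hkey : 0 < T ∧ |d * D| ≤ 0.05 * T by
    obtain ⟨hTpos, hND⟩ := hkey
    have hratio : pdag d l / T - 1 / 2 = (pdag d l - T / 2) / T := by
      field_simp
    rw [hratio, hNeq, abs_div, abs_of_pos hTpos, div_le_iff₀ hTpos]
    linarith
  rcases le_or_gt n 1499 with hsmall | hlarge
  · -- small case
    have hBabs : |B n| ≤ 96 := by
      have := B_abs n
      have h34 : (3/4:ℝ)^n ≤ 1 := pow_le_one₀ (by norm_num) (by norm_num)
      nlinarith
    have hpow : (1/2:ℝ)^1499 ≤ (1/2:ℝ)^n :=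
      pow_le_pow_of_le_one (by norm_num) (by norm_num) hsmall
    have hDabs : |D| ≤ 72 := by
      have h1 := wF_bound n
      have h34 : (3/4:ℝ)^n ≤ 1 := pow_le_one₀ (by norm_num) (by norm_num)
      have h2 : |(1/2:ℝ)^n * F n| ≤ 24 := by nlinarith
      have h3 : |B n / 2| = |B n| / 2 := by rw [abs_div, abs_two]
      have h4 := abs_sub ((1/2:ℝ)^n * F n) (B n / 2)
      rw [h3] at h4
      linarith
    exact small_case_arith d ((1/2:ℝ)^n) (B n) D T hd hdlt hpow hBabs hTeq hDabs
  · -- large case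
    have hn55 : 55 ≤ n := by omega
    have hlog4 : (4:ℝ) ≤ Real.log n := my_log_ge_four hn55
    have hFl : (n:ℝ) * (Real.log n - 3.5) ≤ F n := F_lower hn55
    have hF0 : 0 ≤ F n := F_nonneg hn55
    have hncast : (1500:ℝ) ≤ (n:ℝ) := by exact_mod_cast hlarge
    have hBl : 2 * (1/2:ℝ)^n * F n ≤ B n := B_lower hn55
    have hp : (0:ℝ) < (1/2:ℝ)^n := by positivity
    have hDabs : |D| ≤ (1/2:ℝ)^n * (12 * Real.log n + 24) := D_abs_large hn55
    exact large_case_arith d ((1/2:ℝ)^n) (Real.log n) ((n:ℝ)) (F n) (B n) D T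
      hd hp hlog4 hncast hFl hF0 hBl hTeq hDabs
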